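/- Let K, τ ∈ ℤ₊ with τ ≤ K, J = ⌈K/τ⌉, and partition [K] into blocks T_j = {τ(j−1)+1, …, τj}. Given g_k ∈ ℝⁿ with η·g_k(a) ≥ −1, define block averages g_{(j)} = (1/τ)∑_{k∈T_j} g_k, the multiplicative-weights iterates x_{(j+1)}(a) ∝ x_{(j)}(a)·e^{−η g_{(j)}(a)} with uniform x_{(1)}, and set x_k = x_{(j)} for k ∈ T_j. Then max_{x∈Δ(n)} ∑_{k=1}^K ⟨g_k, x_k − x⟩ ≤ (τ log n)/η + τ·max_k ‖g_k‖_∞ + η·∑_{k=1}^K ∑_{i=1}^n x_k(i)·g_k(i)². -/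

import Mathlib

open Finset

private theorem exp_aux (y : ℝ) (hy : y ≤ 1) : Real.exp y ≤ 1 + y + y ^ 2 := by
  rcases le_total (-1) y with h | h
  · have habs : |y| ≤ 1 := abs_le.2 ⟨h, hy⟩
    have hb := Real.exp_bound habs (n := 2) (by norm_num)
    have h2 : ∑ m ∈ range 2, y ^ m / m.factorial = 1 + y := by
      simp [Finset.sum_range_succ, Nat.factorial]
    rw [h2] at hb
    have h3 := (abs_sub_le_iff.1 hb).1
    rw [sq_abs] at h3
    norm_num [Nat.factorial] at h3
    nlinarith [sq_nonneg y]
  · have h1 : Real.exp y ≤ 1 := Real.exp_le_one_iff.2 (by linarith)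
    nlinarith

private theorem div_aux (τ j k : ℕ) (h1 : τ * j ≤ k) (h2 : k < τ * (j + 1)) : k / τ = j :=
  Nat.div_eq_of_lt_le (by rwa [mul_comm] at h1)
    (by rw [Nat.succ_mul, mul_comm j τ]; rwa [Nat.mul_succ] at h2)

private theorem blocksum_aux (τ K : ℕ) (hτ : 0 < τ) (F : ℕ → ℝ) :
    ∑ j ∈ range K, ∑ k ∈ Finset.Ico (τ * j) (min (τ * (j + 1)) K), F k
      = ∑ k ∈ range K, F k := by
  have hIco : ∀ j, Finset.Ico (τ * j) (min (τ * (j + 1)) K)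
      = Finset.Ico (min (τ * j) K) (min (τ * (j + 1)) K) := by
    intro j
    rcases le_total (τ * j) K with h | h
    · rw [min_eq_left h]
    · rw [Finset.Ico_eq_empty (by omega : ¬ τ * j < min (τ * (j + 1)) K),
        Finset.Ico_eq_empty (by omega : ¬ min (τ * j) K < min (τ * (j + 1)) K)]
  have key : ∀ J : ℕ, ∑ j ∈ range J,
        ∑ k ∈ Finset.Ico (min (τ * j) K) (min (τ * (j + 1)) K), F k
      = ∑ k ∈ Finset.Ico 0 (min (τ * J) K), F k := by
    intro J
    induction J with
    | zero => simp
    | succ J ih =>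
      rw [Finset.sum_range_succ, ih, Finset.sum_Ico_consecutive]
      · omega
      · exact min_le_min (Nat.mul_le_mul_left τ (Nat.le_succ J)) le_rfl
  calc ∑ j ∈ range K, ∑ k ∈ Finset.Ico (τ * j) (min (τ * (j + 1)) K), F k
      = ∑ j ∈ range K, ∑ k ∈ Finset.Ico (min (τ * j) K) (min (τ * (j + 1)) K), F k :=
        Finset.sum_congr rfl fun j _ => by rw [hIco]
    _ = ∑ k ∈ Finset.Ico 0 (min (τ * K) K), F k := key K
    _ = ∑ k ∈ range K, F k := by
        rw [min_eq_right (Nat.le_mul_of_pos_left K hτ), ← Finset.range_eq_Ico]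

/-- Entropy-regularized OMD with blocking: losses are averaged over consecutive blocks of
length `τ` and the exponential-weights iterate is updated once per block; the played point
at round `k` is the iterate of the block containing `k`. Then for every point `z` of the
simplex, `∑_k ⟨g_k, x_k − z⟩ ≤ τ log n / η + τ max_k ‖g_k‖_∞ + η ∑_k ∑_i x_k(i) g_k(i)²`.
(Rounds are indexed `k = 0, …, K-1`; the block of round `k` is `k / τ`.) -/
theorem stmt_6 (n K τ : ℕ) (hn : 0 < n) (hτ : 0 < τ) (hτK : τ ≤ K)
    (η : ℝ) (hη : 0 < η)
    (g : ℕ → Fin n → ℝ) (hg : ∀ k, k < K → ∀ a, -1 ≤ η * g k a)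
    (Gmax : ℝ) (hGmax : ∀ k, k < K → ∀ a, |g k a| ≤ Gmax)
    (gbar : ℕ → Fin n → ℝ)
    (hgbar : ∀ j a, gbar j a = (1 / (τ : ℝ)) * ∑ k ∈ Finset.Ico (τ * j) (min (τ * (j + 1)) K), g k a)
    (xblk : ℕ → Fin n → ℝ)
    (hx0 : ∀ a, xblk 0 a = 1 / n)
    (hxupd : ∀ j a,
      xblk (j + 1) a = xblk j a * Real.exp (-η * gbar j a) /
        ∑ a', xblk j a' * Real.exp (-η * gbar j a'))
    (x : ℕ → Fin n → ℝ) (hx : ∀ k, x k = xblk (k / τ))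
    (z : Fin n → ℝ) (hz0 : ∀ i, 0 ≤ z i) (hz1 : ∑ i, z i = 1) :
    ∑ k ∈ Finset.range K, ∑ i, g k i * (x k i - z i) ≤
      (τ : ℝ) * Real.log n / η + (τ : ℝ) * Gmax
        + η * ∑ k ∈ Finset.range K, ∑ i, x k i * (g k i) ^ 2 := by
  have hτR : (0:ℝ) < τ := Nat.cast_pos.2 hτ
  have hnR : (0:ℝ) < n := Nat.cast_pos.2 hn
  have hne : (Finset.univ : Finset (Fin n)).Nonempty := ⟨⟨0, hn⟩, mem_univ _⟩
  -- positivity and normalization of the iterates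
  have hprop : ∀ j, (∀ a, 0 < xblk j a) ∧ ∑ a, xblk j a = 1 := by
    intro j
    induction j with
    | zero =>
      refine ⟨fun a => by rw [hx0 a]; positivity, ?_⟩
      simp only [hx0, Finset.sum_const, card_univ, Fintype.card_fin, nsmul_eq_mul]
      field_simp
    | succ j ih =>
      obtain ⟨hpos, hsum⟩ := ih
      have hD : 0 < ∑ a', xblk j a' * Real.exp (-η * gbar j a') :=
        Finset.sum_pos (fun a _ => mul_pos (hpos a) (Real.exp_pos _)) hne
      refine ⟨fun a => by
        rw [hxupd]; exact div_pos (mul_pos (hpos a) (Real.exp_pos _)) hD, ?_⟩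
      simp only [hxupd]
      rw [← Finset.sum_div, div_self (ne_of_gt hD)]
  -- block cardinality
  have hcardB : ∀ j, (Finset.Ico (τ * j) (min (τ * (j + 1)) K)).card ≤ τ := by
    intro j; rw [Nat.card_Ico, Nat.mul_succ]; omega
  -- gbar bound
  have hgb : ∀ j a, -1 ≤ η * gbar j a := by
    intro j a
    rw [hgbar]
    set B := Finset.Ico (τ * j) (min (τ * (j + 1)) K) with hB
    have h1 : ∀ k ∈ B, -1 ≤ η * g k a := fun k hk =>
      hg k (by have := (Finset.mem_Ico.1 hk).2; omega) a
    have h2 : -(B.card : ℝ) ≤ ∑ k ∈ B, η * g k a := by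
      calc -(B.card : ℝ) = ∑ _k ∈ B, (-1 : ℝ) := by simp
        _ ≤ ∑ k ∈ B, η * g k a := Finset.sum_le_sum h1
    have h3 : η * ((1 / (τ:ℝ)) * ∑ k ∈ B, g k a) = (1/(τ:ℝ)) * ∑ k ∈ B, η * g k a := by
      rw [Finset.mul_sum, Finset.mul_sum, Finset.mul_sum]
      exact Finset.sum_congr rfl fun k _ => by ring
    rw [h3]
    have hc : (B.card : ℝ) ≤ τ := by exact_mod_cast hcardB j
    have h4 : (1/(τ:ℝ)) * (-(B.card : ℝ)) ≤ (1/(τ:ℝ)) * ∑ k ∈ B, η * g k a :=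
      mul_le_mul_of_nonneg_left h2 (by positivity)
    have h5 : -1 ≤ (1/(τ:ℝ)) * (-(B.card : ℝ)) := by
      rw [mul_neg, neg_le_neg_iff, one_div, inv_mul_le_iff₀ hτR]
      linarith
    linarith
  -- the potential
  set Φ : ℕ → ℝ := fun j => -∑ a, z a * Real.log (xblk j a) with hΦdef
  -- per-block inequality
  have keyblock : ∀ j, η * ∑ a, gbar j a * (xblk j a - z a)
      ≤ (Φ j - Φ (j + 1)) + η ^ 2 * ∑ a, xblk j a * gbar j a ^ 2 := by
    intro j
    obtain ⟨hpos, hsum⟩ := hprop j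
    set D := ∑ a', xblk j a' * Real.exp (-η * gbar j a') with hDdef
    have hD : 0 < D := Finset.sum_pos (fun a _ => mul_pos (hpos a) (Real.exp_pos _)) hne
    have hΦstep : Φ (j + 1) = Φ j + η * ∑ a, z a * gbar j a + Real.log D := by
      have hlog : ∀ a, Real.log (xblk (j + 1) a)
          = Real.log (xblk j a) + (-η * gbar j a) - Real.log D := by
        intro a
        rw [hxupd, ← hDdef, Real.log_div (mul_ne_zero (hpos a).ne' (Real.exp_pos _).ne') hD.ne',
          Real.log_mul (hpos a).ne' (Real.exp_pos _).ne', Real.log_exp]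
      simp only [hΦdef]
      rw [show (∑ a, z a * Real.log (xblk (j+1) a))
          = ∑ a, z a * (Real.log (xblk j a) + (-η * gbar j a) - Real.log D) from
        Finset.sum_congr rfl fun a _ => by rw [hlog]]
      have e1 : ∑ a, z a * (Real.log (xblk j a) + (-η * gbar j a) - Real.log D)
          = ∑ a, z a * Real.log (xblk j a) - η * ∑ a, z a * gbar j a
            - Real.log D * ∑ a, z a := by
        rw [Finset.mul_sum, Finset.mul_sum, ← Finset.sum_sub_distrib, ← Finset.sum_sub_distrib]
        exact Finset.sum_congr rfl fun a _ => by ring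
      rw [e1, hz1]; ring
    have hZ : Real.log D ≤ -η * ∑ a, xblk j a * gbar j a
        + η ^ 2 * ∑ a, xblk j a * gbar j a ^ 2 := by
      have hDle : D ≤ 1 + (-η) * ∑ a, xblk j a * gbar j a
          + η ^ 2 * ∑ a, xblk j a * gbar j a ^ 2 := by
        have step : ∀ a ∈ (Finset.univ : Finset (Fin n)),
            xblk j a * Real.exp (-η * gbar j a)
              ≤ xblk j a * (1 + (-η * gbar j a) + (-η * gbar j a) ^ 2) := fun a _ =>
          mul_le_mul_of_nonneg_left (exp_aux _ (by have := hgb j a; linarith)) (hpos a).le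
        calc D ≤ ∑ a, xblk j a * (1 + (-η * gbar j a) + (-η * gbar j a) ^ 2) :=
              Finset.sum_le_sum step
          _ = (∑ a, xblk j a) + (-η) * ∑ a, xblk j a * gbar j a
              + η ^ 2 * ∑ a, xblk j a * gbar j a ^ 2 := by
              rw [Finset.mul_sum, Finset.mul_sum, ← Finset.sum_add_distrib,
                ← Finset.sum_add_distrib]
              exact Finset.sum_congr rfl fun a _ => by ring
          _ = 1 + (-η) * ∑ a, xblk j a * gbar j a
              + η ^ 2 * ∑ a, xblk j a * gbar j a ^ 2 := by rw [hsum]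
      have := Real.log_le_sub_one_of_pos hD
      linarith
    have expand : ∑ a, gbar j a * (xblk j a - z a)
        = ∑ a, xblk j a * gbar j a - ∑ a, z a * gbar j a := by
      rw [← Finset.sum_sub_distrib]
      exact Finset.sum_congr rfl fun a _ => by ring
    rw [expand, hΦstep]
    nlinarith [hZ]
  -- potential at 0 and nonnegativity at K
  have hΦ0 : Φ 0 = Real.log n := by
    simp only [hΦdef, hx0]
    rw [← Finset.sum_mul, hz1, one_mul, one_div, Real.log_inv]
    ring
  have hΦK : 0 ≤ Φ K := by
    simp only [hΦdef]
    rw [neg_nonneg]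
    apply Finset.sum_nonpos
    intro a _
    obtain ⟨hpos, hsum⟩ := hprop K
    have hle1 : xblk K a ≤ 1 := hsum ▸ Finset.single_le_sum (fun b _ => (hpos b).le) (mem_univ a)
    exact mul_nonpos_of_nonneg_of_nonpos (hz0 a) (Real.log_nonpos (hpos a).le hle1)
  -- summed OMD bound
  set A := ∑ j ∈ range K, ∑ a, gbar j a * (xblk j a - z a) with hAdef
  set S := ∑ j ∈ range K, ∑ a, xblk j a * gbar j a ^ 2 with hSdef
  have hsum_main : η * A ≤ Real.log n + η ^ 2 * S := by
    have tele : ∑ j ∈ range K, (Φ j - Φ (j + 1)) = Φ 0 - Φ K := Finset.sum_range_sub' Φ K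
    calc η * A = ∑ j ∈ range K, η * ∑ a, gbar j a * (xblk j a - z a) := by
          rw [hAdef, Finset.mul_sum]
      _ ≤ ∑ j ∈ range K, ((Φ j - Φ (j + 1)) + η ^ 2 * ∑ a, xblk j a * gbar j a ^ 2) :=
          Finset.sum_le_sum fun j _ => keyblock j
      _ = (Φ 0 - Φ K) + η ^ 2 * S := by
          rw [Finset.sum_add_distrib, tele, hSdef, Finset.mul_sum]
      _ ≤ Real.log n + η ^ 2 * S := by rw [hΦ0]; linarith
  -- rewrite the LHS as τ * A
  have hL : ∑ k ∈ Finset.range K, ∑ i, g k i * (x k i - z i) = (τ : ℝ) * A := by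
    rw [← blocksum_aux τ K hτ (fun k => ∑ i, g k i * (x k i - z i)), hAdef, Finset.mul_sum]
    apply Finset.sum_congr rfl
    intro j _
    set B := Finset.Ico (τ * j) (min (τ * (j + 1)) K) with hB
    have hxk : ∀ k ∈ B, x k = xblk j := by
      intro k hk
      obtain ⟨h1, h2⟩ := Finset.mem_Ico.1 hk
      rw [hx, div_aux τ j k h1 (by omega)]
    have hτg : ∀ i, ∑ k ∈ B, g k i = (τ : ℝ) * gbar j i := by
      intro i; rw [hgbar, ← hB]; field_simp
    calc ∑ k ∈ B, ∑ i, g k i * (x k i - z i)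
        = ∑ k ∈ B, ∑ i, g k i * (xblk j i - z i) :=
          Finset.sum_congr rfl fun k hk => by rw [hxk k hk]
      _ = ∑ i, ∑ k ∈ B, g k i * (xblk j i - z i) := Finset.sum_comm
      _ = ∑ i, (∑ k ∈ B, g k i) * (xblk j i - z i) := by
          exact Finset.sum_congr rfl fun i _ => (Finset.sum_mul ..).symm
      _ = ∑ i, ((τ:ℝ) * gbar j i) * (xblk j i - z i) :=
          Finset.sum_congr rfl fun i _ => by rw [hτg]
      _ = (τ:ℝ) * ∑ i, gbar j i * (xblk j i - z i) := by
          rw [Finset.mul_sum]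
          exact Finset.sum_congr rfl fun i _ => by ring
  -- Jensen step
  have hJen : (τ : ℝ) * S ≤ ∑ k ∈ Finset.range K, ∑ i, x k i * (g k i) ^ 2 := by
    rw [← blocksum_aux τ K hτ (fun k => ∑ i, x k i * (g k i) ^ 2), hSdef, Finset.mul_sum]
    apply Finset.sum_le_sum
    intro j _
    set B := Finset.Ico (τ * j) (min (τ * (j + 1)) K) with hB
    have hxk : ∀ k ∈ B, x k = xblk j := by
      intro k hk
      obtain ⟨h1, h2⟩ := Finset.mem_Ico.1 hk
      rw [hx, div_aux τ j k h1 (by omega)]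
    have hRHS : ∑ k ∈ B, ∑ i, x k i * (g k i) ^ 2
        = ∑ a, xblk j a * ∑ k ∈ B, g k a ^ 2 := by
      calc ∑ k ∈ B, ∑ i, x k i * (g k i) ^ 2
          = ∑ k ∈ B, ∑ i, xblk j i * (g k i) ^ 2 :=
            Finset.sum_congr rfl fun k hk => by rw [hxk k hk]
        _ = ∑ a, ∑ k ∈ B, xblk j a * (g k a) ^ 2 := Finset.sum_comm
        _ = ∑ a, xblk j a * ∑ k ∈ B, g k a ^ 2 :=
            Finset.sum_congr rfl fun a _ => (Finset.mul_sum ..).symm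
    rw [hRHS, Finset.mul_sum]
    apply Finset.sum_le_sum
    intro a _
    have hS2 : (∑ k ∈ B, g k a) ^ 2 ≤ (B.card : ℝ) * ∑ k ∈ B, g k a ^ 2 :=
      sq_sum_le_card_mul_sum_sq
    have hc : (B.card : ℝ) ≤ τ := by exact_mod_cast hcardB j
    have hg2 : (0:ℝ) ≤ ∑ k ∈ B, g k a ^ 2 := Finset.sum_nonneg fun k _ => sq_nonneg _
    have hxa := (hprop j).1 a
    rw [hgbar, ← hB]
    have heq : (τ:ℝ) * (xblk j a * ((1 / (τ:ℝ)) * ∑ k ∈ B, g k a) ^ 2)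
        = xblk j a * ((∑ k ∈ B, g k a) ^ 2 / τ) := by
      field_simp
    rw [heq]
    apply mul_le_mul_of_nonneg_left _ hxa.le
    rw [div_le_iff₀ hτR]
    nlinarith
  -- Gmax ≥ 0
  have hG : 0 ≤ Gmax := le_trans (abs_nonneg _) (hGmax 0 (by omega) ⟨0, hn⟩)
  -- conclude
  rw [hL]
  have h1 : A ≤ Real.log n / η + η * S := by
    rw [show Real.log n / η + η * S = (Real.log n + η ^ 2 * S) / η by field_simp,
      le_div_iff₀ hη]
    nlinarith [hsum_main]
  have h2 : (τ:ℝ) * A ≤ (τ:ℝ) * (Real.log n / η + η * S) :=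
    mul_le_mul_of_nonneg_left h1 hτR.le
  have h3 : η * ((τ:ℝ) * S) ≤ η * ∑ k ∈ Finset.range K, ∑ i, x k i * (g k i) ^ 2 :=
    mul_le_mul_of_nonneg_left hJen hη.le
  have h4 : (τ:ℝ) * (Real.log n / η + η * S) = (τ:ℝ) * Real.log n / η + η * ((τ:ℝ) * S) := by
    ring
  have h5 : 0 ≤ (τ:ℝ) * Gmax := mul_nonneg hτR.le hG
  linarith
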